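/- Let G be a connected triangle-free graph containing no induced copy of P_1 + S_{1,1,2}. If G contains an induced cycle C of odd length k ≥ 7, then G is equal to C (i.e., G has no vertices outside C). -/

import Mathlib

/-- The cycle on `k` vertices. -/
def cyc (k : ℕ) : SimpleGraph (Fin k) :=
  SimpleGraph.fromRel (fun i j => j.val = (i.val + 1) % k)

/-- P₁ + S_{1,1,2}: an isolated vertex (0) together with the tree on
{1,2,3,4,5} with centre 1 adjacent to 2, 3, 4 and 4 adjacent to 5. -/
def P1S112 : SimpleGraph (Fin 6) :=
  SimpleGraph.fromRel (fun a b => (a.val, b.val) ∈ [(1,2),(1,3),(1,4),(4,5)])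

open Fin.NatCast Fin.CommRing

section helpers
variable {k : ℕ} [NeZero k]

lemma fin_cast_eq_iff (hk : 2 ≤ k) (i : Fin k) (a b : ℕ) :
    i + (a : Fin k) = i + (b : Fin k) ↔ a % k = b % k := by
  constructor
  · intro h
    have hv : (i.val + a) % k = (i.val + b) % k := by
      have := congrArg Fin.val h
      simpa [Fin.add_def, Fin.val_natCast, Nat.mod_add_mod, Nat.add_mod_mod] using this
    exact Nat.ModEq.add_left_cancel' i.val hv
  · intro h
    have : (i.val + a) % k = (i.val + b) % k := Nat.ModEq.add_left i.val h
    apply Fin.ext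
    simpa [Fin.add_def, Fin.val_natCast, Nat.mod_add_mod, Nat.add_mod_mod] using this

lemma cyc_adj (hk : 2 ≤ k) (i j : Fin k) :
    (cyc k).Adj i j ↔ (j = i + ((1:ℕ) : Fin k) ∨ i = j + ((1:ℕ) : Fin k)) := by
  have key : ∀ x y : Fin k, (y.val = (x.val + 1) % k) ↔ y = x + ((1:ℕ) : Fin k) := by
    intro x y
    constructor
    · intro h; apply Fin.ext
      simpa [Fin.add_def, Fin.val_natCast, Nat.mod_add_mod, Nat.add_mod_mod] using h
    · intro h; subst h
      simp [Fin.add_def, Fin.val_natCast, Nat.mod_add_mod, Nat.add_mod_mod]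
  have hne : ∀ x : Fin k, x ≠ x + ((1:ℕ) : Fin k) := by
    intro x hx
    have := congrArg Fin.val hx
    simp [Fin.add_def, Fin.val_natCast] at this
    rcases Nat.lt_or_ge (x.val + 1) k with h | h
    · rw [Nat.mod_eq_of_lt h] at this; omega
    · have hxv : x.val < k := x.isLt
      have h2 : x.val + 1 = k := by omega
      rw [h2, Nat.mod_self] at this; omega
  unfold cyc
  rw [SimpleGraph.fromRel_adj]
  constructor
  · rintro ⟨hij, h | h⟩
    · left; exact (key i j).mp h
    · right; exact (key j i).mp h
  · rintro (h | h)
    · exact ⟨fun he => hne i (he ▸ h), Or.inl ((key i j).mpr h)⟩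
    · exact ⟨fun he => hne j (he.symm ▸ h), Or.inr ((key j i).mpr h)⟩

lemma cyc_adj_off (hk : 2 ≤ k) (i : Fin k) (a b : ℕ) :
    (cyc k).Adj (i + (a : Fin k)) (i + (b : Fin k)) ↔
      (b % k = (a+1) % k ∨ a % k = (b+1) % k) := by
  rw [cyc_adj hk]
  have h1 : (i + (a : Fin k)) + ((1:ℕ) : Fin k) = i + ((a+1 : ℕ) : Fin k) := by
    push_cast; ring
  have h2 : (i + (b : Fin k)) + ((1:ℕ) : Fin k) = i + ((b+1 : ℕ) : Fin k) := by
    push_cast; ring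
  rw [h1, h2, fin_cast_eq_iff hk, fin_cast_eq_iff hk]

lemma cyc_adj_succ (hk : 2 ≤ k) (i : Fin k) (a : ℕ) :
    (cyc k).Adj (i + (a : Fin k)) (i + ((a+1 : ℕ) : Fin k)) :=
  (cyc_adj_off hk i a (a+1)).mpr (Or.inl rfl)

lemma cyc_nonadj_off (hk : 2 ≤ k) (i : Fin k) (a b : ℕ) (ha : a + 1 < k) (hb : b + 1 < k)
    (h1 : b ≠ a + 1) (h2 : a ≠ b + 1) : ¬ (cyc k).Adj (i + (a : Fin k)) (i + (b : Fin k)) := by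
  rw [cyc_adj_off hk]
  rw [Nat.mod_eq_of_lt (by omega : a < k), Nat.mod_eq_of_lt (by omega : b < k),
    Nat.mod_eq_of_lt ha, Nat.mod_eq_of_lt hb]
  omega

lemma fin_off_ne (hk : 2 ≤ k) (i : Fin k) (a b : ℕ) (ha : a < k) (hb : b < k) (h : a ≠ b) :
    i + (a : Fin k) ≠ i + (b : Fin k) := by
  rw [Ne, fin_cast_eq_iff hk, Nat.mod_eq_of_lt ha, Nat.mod_eq_of_lt hb]
  exact h

end helpers

lemma tri_helper {V : Type*} {G : SimpleGraph V} (htri : G.CliqueFree 3)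
    {a b c : V} (hab : G.Adj a b) (hbc : G.Adj b c) (hac : G.Adj a c) : False := by
  classical
  exact htri {a, b, c} (SimpleGraph.is3Clique_triple_iff.mpr ⟨hab, hac, hbc⟩)

lemma cross {V : Type*} {G : SimpleGraph V} (S : Set V) {a b : V}
    (p : G.Walk a b) (ha : a ∉ S) (hb : b ∈ S) :
    ∃ u w, G.Adj u w ∧ u ∉ S ∧ w ∈ S := by
  classical
  induction p with
  | nil => exact absurd hb ha
  | @cons x y z h p ih =>
    by_cases hy : y ∈ S
    · exact ⟨x, y, h, ha, hy⟩
    · exact ih hy hb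


set_option maxRecDepth 10000 in
lemma no_config {V : Type*} {G : SimpleGraph V} (hfree : IsEmpty (P1S112 ↪g G))
    (z c a b d e : V)
    (hza : z ≠ a) (hzb : z ≠ b) (hzc : z ≠ c) (hzd : z ≠ d) (hze : z ≠ e)
    (hab : a ≠ b) (had : a ≠ d) (hae : a ≠ e)
    (hbd : b ≠ d) (hbe : b ≠ e) (hce : c ≠ e)
    (Aca : G.Adj c a) (Acb : G.Adj c b) (Acd : G.Adj c d) (Ade : G.Adj d e)
    (nzc : ¬G.Adj z c) (nza : ¬G.Adj z a) (nzb : ¬G.Adj z b) (nzd : ¬G.Adj z d)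
    (nze : ¬G.Adj z e)
    (nab : ¬G.Adj a b) (nad : ¬G.Adj a d) (nae : ¬G.Adj a e)
    (nbd : ¬G.Adj b d) (nbe : ¬G.Adj b e) (nce : ¬G.Adj c e) : False := by
  have hca : c ≠ a := Aca.ne
  have hcb : c ≠ b := Acb.ne
  have hcd : c ≠ d := Acd.ne
  have hde : d ≠ e := Ade.ne
  have hac := Aca.symm
  have hbc := Acb.symm
  have hdc := Acd.symm
  have hed := Ade.symm
  apply hfree.false
  refine ⟨⟨fun x => if x.1 = 0 then z else if x.1 = 1 then c else if x.1 = 2 then a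
    else if x.1 = 3 then b else if x.1 = 4 then d else e, ?_⟩, ?_⟩
  · intro x y hxy
    fin_cases x <;> fin_cases y <;> norm_num at hxy ⊢ <;> simp_all
  · intro x y
    show G.Adj ((fun x : Fin 6 => if x.1 = 0 then z else if x.1 = 1 then c else if x.1 = 2 then a
      else if x.1 = 3 then b else if x.1 = 4 then d else e) x)
      ((fun x : Fin 6 => if x.1 = 0 then z else if x.1 = 1 then c else if x.1 = 2 then a
      else if x.1 = 3 then b else if x.1 = 4 then d else e) y) ↔ _
    fin_cases x <;> fin_cases y <;>
      norm_num [P1S112, SimpleGraph.fromRel_adj, Fin.ext_iff] <;>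
      first
        | assumption
        | exact fun h => (G.ne_of_adj h) rfl
        | exact fun h => nzc h.symm
        | exact fun h => nza h.symm
        | exact fun h => nzb h.symm
        | exact fun h => nzd h.symm
        | exact fun h => nze h.symm
        | exact fun h => nab h.symm
        | exact fun h => nad h.symm
        | exact fun h => nae h.symm
        | exact fun h => nbd h.symm
        | exact fun h => nbe h.symm
        | exact fun h => nce h.symm

set_option maxRecDepth 10000 in
lemma comb7 : ∀ Nb : Fin 7 → Bool,
    (∀ j, ¬(Nb j = true ∧ Nb (j + ((1:ℕ) : Fin 7)) = true)) →
    ∀ i, Nb i = true →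
    ∃ j, Nb j = true ∧ ¬ Nb (j + ((2:ℕ) : Fin 7)) = true ∧ ¬ Nb (j + ((4:ℕ) : Fin 7)) = true := by
  decide

theorem statement_5 {V : Type*} (G : SimpleGraph V) (k : ℕ) (hk : 7 ≤ k)
    (hodd : Odd k) (hconn : G.Connected) (htri : G.CliqueFree 3)
    (hfree : IsEmpty (P1S112 ↪g G)) (f : cyc k ↪g G) :
    Function.Surjective f := by
  classical
  haveI : NeZero k := ⟨by omega⟩
  have hk2 : 2 ≤ k := by omega
  by_contra hsur
  rw [Function.Surjective] at hsur
  push_neg at hsur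
  obtain ⟨v, hv⟩ := hsur
  have hvS : v ∉ Set.range f := by rintro ⟨a, rfl⟩; exact hv a rfl
  obtain ⟨u, w, huw, huS, hwS⟩ :=
    cross (Set.range f) ((hconn v (f ⟨0, by omega⟩)).some) hvS ⟨_, rfl⟩
  obtain ⟨i0, rfl⟩ := hwS
  set N : Fin k → Prop := fun j => G.Adj u (f j) with hNdef
  have hN0 : N i0 := huw
  have fadj : ∀ p q : Fin k, G.Adj (f p) (f q) ↔ (cyc k).Adj p q := fun p q => f.map_adj_iff
  have indep : ∀ j : Fin k, ¬(N j ∧ N (j + ((1:ℕ) : Fin k))) := by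
    rintro j ⟨h1, h2⟩
    have hadj : G.Adj (f j) (f (j + ((1:ℕ) : Fin k))) := by
      rw [fadj]
      have := cyc_adj_succ hk2 j 0
      simpa using this
    exact tri_helper htri h1 hadj h2
  -- cast helpers
  have cast_assoc : ∀ (i : Fin k) (a b : ℕ),
      i + (a : Fin k) + (b : Fin k) = i + ((a + b : ℕ) : Fin k) := by
    intro i a b; push_cast; ring
  -- Step 1 : find j with N j and ¬ N (j+2) and (¬N (j+4) ∨ (8 ≤ k ∧ ¬ N (j+5)))
  obtain ⟨j, hNj, hn2, hn45⟩ : ∃ j, N j ∧ ¬ N (j + ((2:ℕ) : Fin k)) ∧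
      (¬ N (j + ((4:ℕ) : Fin k)) ∨ (8 ≤ k ∧ ¬ N (j + ((5:ℕ) : Fin k)))) := by
    rcases eq_or_lt_of_le hk with hk7 | hk8
    · -- k = 7
      have hk7' : k = 7 := hk7.symm
      subst hk7'
      have := comb7 (fun j => decide (N j))
        (by
          intro j hj
          exact indep j ⟨of_decide_eq_true hj.1, of_decide_eq_true hj.2⟩)
        i0 (decide_eq_true hN0)
      obtain ⟨j, h1, h2, h4⟩ := this
      exact ⟨j, of_decide_eq_true h1,
        fun h => h2 (decide_eq_true h), Or.inl fun h => h4 (decide_eq_true h)⟩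
    · -- k ≥ 8
      have hk8' : 8 ≤ k := hk8
      -- first find j with N j ∧ ¬ N (j+2)
      obtain ⟨j, hNj, hn2⟩ : ∃ j, N j ∧ ¬ N (j + ((2:ℕ) : Fin k)) := by
        by_contra hcl
        push_neg at hcl
        have chain : ∀ n : ℕ, N (i0 + ((2 * n : ℕ) : Fin k)) := by
          intro n
          induction n with
          | zero => simpa using hN0
          | succ n ih =>
            have := hcl _ ih
            rw [cast_assoc] at this
            have heq : 2 * n + 2 = 2 * (n + 1) := by ring
            rwa [heq] at this
        obtain ⟨m, hm⟩ := hodd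
        have h1 := chain ((k+1)/2)
        have h2 : 2 * ((k+1)/2) = k + 1 := by omega
        rw [h2] at h1
        have h3 : i0 + ((k + 1 : ℕ) : Fin k) = i0 + ((1:ℕ) : Fin k) := by
          rw [fin_cast_eq_iff hk2]
          exact Nat.add_mod_left k 1
        rw [h3] at h1
        exact indep i0 ⟨hN0, h1⟩
      refine ⟨j, hNj, hn2, ?_⟩
      by_cases h4 : N (j + ((4:ℕ) : Fin k))
      · right
        refine ⟨hk8', ?_⟩
        intro h5
        apply indep (j + ((4:ℕ) : Fin k))
        refine ⟨h4, ?_⟩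
        rwa [cast_assoc]
      · exact Or.inl h4
  -- now set up the configuration
  obtain ⟨woff, hw56, hnw⟩ : ∃ woff : ℕ, (woff = 5 ∨ (woff = 6 ∧ 8 ≤ k)) ∧
      ¬ N (j + ((woff - 1 : ℕ) : Fin k)) := by
    rcases hn45 with h | ⟨h8, h5⟩
    · exact ⟨5, Or.inl rfl, by simpa using h⟩
    · exact ⟨6, Or.inr ⟨rfl, h8⟩, by simpa using h5⟩
  set p : Fin k := j + ((k - 1 : ℕ) : Fin k) with hp
  have shift : ∀ a : ℕ, p + ((a + 1 : ℕ) : Fin k) = j + ((a : ℕ) : Fin k) := by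
    intro a
    rw [hp, cast_assoc, fin_cast_eq_iff hk2]
    have : k - 1 + (a + 1) = k + a := by omega
    rw [this]
    exact Nat.add_mod_left k a
  have hwk : woff + 1 < k := by rcases hw56 with h | ⟨h, h8⟩ <;> omega
  -- N facts in p coordinates
  have hNp1 : N (p + ((1:ℕ) : Fin k)) := by
    have : p + ((1:ℕ) : Fin k) = j := by
      have := shift 0
      simpa using this
    rwa [this]
  have hNp0 : ¬ N p := by
    intro h0
    apply indep p
    refine ⟨h0, ?_⟩
    have : p + ((1:ℕ) : Fin k) = j := by simpa using shift 0
    rwa [this]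
  have hNp2 : ¬ N (p + ((2:ℕ) : Fin k)) := by
    rw [show (2:ℕ) = 1 + 1 from rfl, shift 1]
    intro h
    exact indep j ⟨hNj, h⟩
  have hNp3 : ¬ N (p + ((3:ℕ) : Fin k)) := by
    rw [show (3:ℕ) = 2 + 1 from rfl, shift 2]
    exact hn2
  have hNpw : ¬ N (p + ((woff : ℕ) : Fin k)) := by
    have hw1 : woff = (woff - 1) + 1 := by omega
    rw [hw1, shift (woff - 1)]
    exact hnw
  -- vertices
  have hp0 : p = p + ((0:ℕ) : Fin k) := by simp
  -- distinctness of used offsets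
  have finj : Function.Injective f := f.toEmbedding.injective
  have fne : ∀ a b : ℕ, a < k → b < k → a ≠ b →
      f (p + (a : Fin k)) ≠ f (p + (b : Fin k)) := by
    intro a b ha hb hab h
    exact fin_off_ne hk2 p a b ha hb hab (finj h)
  have fnadj : ∀ a b : ℕ, a + 1 < k → b + 1 < k → b ≠ a + 1 → a ≠ b + 1 →
      ¬ G.Adj (f (p + (a : Fin k))) (f (p + (b : Fin k))) := by
    intro a b ha hb h1 h2 h
    exact cyc_nonadj_off hk2 p a b ha hb h1 h2 ((fadj _ _).mp h)
  have fadjsucc : ∀ a : ℕ, G.Adj (f (p + (a : Fin k))) (f (p + ((a+1 : ℕ) : Fin k))) := by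
    intro a
    rw [fadj]
    exact cyc_adj_succ hk2 p a
  have hune : ∀ x : Fin k, f x ≠ u := by
    intro x h
    exact huS ⟨x, h⟩
  have hwoffk : woff < k := by omega
  have h5 : (5:ℕ) ≤ woff := by rcases hw56 with h | ⟨h, _⟩ <;> omega
  -- apply no_config with z = f(p+woff), c = f(p+1), a = f(p+0), b = u, d = f(p+2), e = f(p+3)
  have hNp00 : ¬ N (p + ((0:ℕ) : Fin k)) := by
    rw [show p + ((0:ℕ) : Fin k) = p by simp]
    exact hNp0
  refine no_config hfree (f (p + ((woff:ℕ) : Fin k))) (f (p + ((1:ℕ) : Fin k)))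
    (f (p + ((0:ℕ) : Fin k))) u (f (p + ((2:ℕ) : Fin k))) (f (p + ((3:ℕ) : Fin k)))
    ?_ ?_ ?_ ?_ ?_ ?_ ?_ ?_ ?_ ?_ ?_ ?_ ?_ ?_ ?_ ?_ ?_ ?_ ?_ ?_ ?_ ?_ ?_ ?_ ?_ ?_
  · exact fne woff 0 hwoffk (by omega) (by omega)
  · exact hune _
  · exact fne woff 1 hwoffk (by omega) (by omega)
  · exact fne woff 2 hwoffk (by omega) (by omega)
  · exact fne woff 3 hwoffk (by omega) (by omega)
  · exact hune _
  · exact fne 0 2 (by omega) (by omega) (by omega)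
  · exact fne 0 3 (by omega) (by omega) (by omega)
  · exact (hune _).symm
  · exact (hune _).symm
  · exact fne 1 3 (by omega) (by omega) (by omega)
  · exact (fadjsucc 0).symm
  · exact hNp1.symm
  · exact fadjsucc 1
  · exact fadjsucc 2
  · exact fnadj woff 1 hwk (by omega) (by omega) (by omega)
  · exact fnadj woff 0 hwk (by omega) (by omega) (by omega)
  · exact fun h => hNpw h.symm
  · exact fnadj woff 2 hwk (by omega) (by omega) (by omega)
  · exact fnadj woff 3 hwk (by omega) (by omega) (by omega)
  · exact fun h => hNp00 h.symm
  · exact fnadj 0 2 (by omega) (by omega) (by omega) (by omega)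
  · exact fnadj 0 3 (by omega) (by omega) (by omega) (by omega)
  · exact hNp2
  · exact hNp3
  · exact fnadj 1 3 (by omega) (by omega) (by omega) (by omega)
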